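/- arXiv:1406.5240 — 4 statements merged into one kernel-verified Lean document; each statement's English description precedes it below -/
import Mathlib

section
/- Let b be the upper shift matrix and b^t the lower shift matrix in n×n matrices over ℂ[λ], and J = λ·e_{n1} + b. Then for every 1 ≤ i ≤ n−1, J^i = λ·(b^t)^{n−i} + b^i. -/
open Matrix Polynomial

lemma sum_delta {n : ℕ} (t : ℕ) (f : Fin n → Polynomial ℂ) :
    (∑ m : Fin n, if t = (m : ℕ) then f m else 0) =
      if h : t < n then f ⟨t, h⟩ else 0 := by
  split
  · next h =>
      rw [Finset.sum_eq_single (⟨t, h⟩ : Fin n)]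
      · simp
      · intro m _ hm
        rw [if_neg]
        intro he
        exact hm (by simp [Fin.ext_iff, ← he])
      · simp
  · next h =>
      apply Finset.sum_eq_zero
      intro m _
      rw [if_neg]
      intro he
      exact h (he ▸ m.isLt)

lemma pow_shift {n : ℕ} (k : ℕ) :
    (Matrix.of fun i j : Fin n => if (i:ℕ)+1 = j then (1:Polynomial ℂ) else 0) ^ k =
    Matrix.of fun i j : Fin n => if (i:ℕ)+k = j then 1 else 0 := by
  induction k with
  | zero => ext i j; simp [Matrix.one_apply, Fin.ext_iff, eq_comm]
  | succ k ih =>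
      rw [pow_succ, ih]
      ext i j
      simp only [Matrix.mul_apply, Matrix.of_apply, ite_mul, one_mul, zero_mul]
      rw [sum_delta ((i:ℕ)+k) (fun m => if (m:ℕ)+1 = j then 1 else 0)]
      split
      · next h => simp only []; split_ifs <;> simp_all <;> omega
      · next h => rw [if_neg]; omega

lemma pow_shift' {n : ℕ} (k : ℕ) :
    (Matrix.of fun i j : Fin n => if (j:ℕ)+1 = i then (1:Polynomial ℂ) else 0) ^ k =
    Matrix.of fun i j : Fin n => if (j:ℕ)+k = i then 1 else 0 := by
  have h : (Matrix.of fun i j : Fin n => if (j:ℕ)+1 = i then (1:Polynomial ℂ) else 0)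
      = (Matrix.of fun i j : Fin n => if (i:ℕ)+1 = j then (1:Polynomial ℂ) else 0)ᵀ := rfl
  rw [h, ← Matrix.transpose_pow, pow_shift]
  rfl

theorem stmt1 (n : ℕ) (hn : 0 < n)
    (b bt J : Matrix (Fin n) (Fin n) (Polynomial ℂ))
    (hb : b = Matrix.of fun i j : Fin n => if (i : ℕ) + 1 = (j : ℕ) then 1 else 0)
    (hbt : bt = Matrix.of fun i j : Fin n => if (j : ℕ) + 1 = (i : ℕ) then 1 else 0)
    (hJ : J = (X : Polynomial ℂ) • Matrix.single (⟨n - 1, by omega⟩ : Fin n) (⟨0, hn⟩ : Fin n) (1 : Polynomial ℂ) + b) :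
    ∀ i : ℕ, 1 ≤ i → i ≤ n - 1 → J ^ i = (X : Polynomial ℂ) • bt ^ (n - i) + b ^ i := by
  subst hb hbt hJ
  intro i hi1
  induction i, hi1 using Nat.le_induction with
  | base =>
      intro h1
      rw [pow_one, pow_one]
      congr 2
      ext p q
      have hp := p.isLt; have hq := q.isLt
      rw [pow_shift']
      simp only [Matrix.single, Matrix.of_apply, Fin.mk.injEq, ← Fin.ext_iff, Fin.ext_iff]
      split_ifs <;> first | rfl | (exfalso; omega)
  | succ i hi ih =>
      intro h2
      have ihe := ih (by omega)
      rw [pow_succ', ihe]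
      apply Matrix.ext
      intro p q
      have hp := p.isLt; have hq := q.isLt
      rw [pow_shift, pow_shift, pow_shift', pow_shift']
      simp only [Matrix.mul_apply, Matrix.add_apply, Matrix.smul_apply, Matrix.of_apply,
        smul_eq_mul, Matrix.single, Fin.ext_iff, Fin.mk.injEq]
      have e1 : ∀ x : Fin n, (((X : Polynomial ℂ) * if n - 1 = (p:ℕ) ∧ 0 = (x:ℕ) then 1 else 0) + if (p:ℕ) + 1 = (x:ℕ) then 1 else 0) *
            (((X : Polynomial ℂ) * if (q:ℕ) + (n - i) = (x:ℕ) then 1 else 0) + if (x:ℕ) + i = (q:ℕ) then 1 else 0) =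
          (if (0:ℕ) = (x:ℕ) then ((X : Polynomial ℂ) * if n - 1 = (p:ℕ) then 1 else 0) *
            (((X : Polynomial ℂ) * if (q:ℕ) + (n - i) = (x:ℕ) then 1 else 0) + if (x:ℕ) + i = (q:ℕ) then 1 else 0) else 0) +
          (if (p:ℕ) + 1 = (x:ℕ) then
            (((X : Polynomial ℂ) * if (q:ℕ) + (n - i) = (x:ℕ) then 1 else 0) + if (x:ℕ) + i = (q:ℕ) then 1 else 0) else 0) := by
        intro x
        simp only [ite_and]
        split_ifs <;> first | ring1 | (exfalso; omega)
      rw [Finset.sum_congr rfl (fun x _ => e1 x), Finset.sum_add_distrib, sum_delta, sum_delta]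
      simp only [Fin.val_mk]
      split_ifs <;> first | ring1 | (exfalso; omega)
end

section
/- Let Λ = Σ_{k=1}^{n−1} ((1−α^k)/(1−α)) e_{k+1,k} with α = e^{2πi/n}, and b the upper shift matrix. Then the set {Λ^i (b)^{n−1} Λ^j : 0 ≤ i, j ≤ n−1} spans gl(n,ℂ) (and after removing one element with trace, is a basis of sl(n,ℂ) in the appropriate sense), and {Λ^i b^{n−1} Λ^j : i, j ≥ 0, i + j < n−1} is a basis of the strictly upper triangular matrices N_+. -/
open Matrix

lemma aux_pow_ne_one (n : ℕ) (hn : 2 ≤ n) (α : ℂ)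
    (hα : α = Complex.exp (2 * Real.pi * Complex.I / n))
    {t : ℕ} (ht : 0 < t) (htn : t < n) : α ^ t ≠ 1 := by
  have hn0 : (n : ℂ) ≠ 0 := Nat.cast_ne_zero.mpr (by omega)
  have h2 : (2 * Real.pi * Complex.I : ℂ) ≠ 0 := by
    simp [Real.pi_ne_zero, Complex.I_ne_zero]
  intro h
  rw [hα, ← Complex.exp_nat_mul, Complex.exp_eq_one_iff] at h
  obtain ⟨k, hk⟩ := h
  have : (t : ℂ) = k * n := by
    field_simp at hk
    have h2' : (2 * Real.pi * Complex.I : ℂ) ≠ 0 := h2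
    apply mul_left_cancel₀ h2'
    linear_combination (2 * Real.pi * Complex.I) * hk
  have ht' : (t : ℤ) = k * n := by exact_mod_cast this
  have hk1 : 1 ≤ k := by nlinarith [ht', (by exact_mod_cast ht : (0:ℤ) < t), (by exact_mod_cast hn : (2:ℤ) ≤ n)]
  nlinarith [ht', (by exact_mod_cast htn : (t:ℤ) < n), (by exact_mod_cast hn : (2:ℤ) ≤ n)]

lemma aux_bpow (n : ℕ) (b : Matrix (Fin n) (Fin n) ℂ)
    (hb : b = Matrix.of fun i j : Fin n => if (i : ℕ) + 1 = (j : ℕ) then 1 else 0) (k : ℕ) :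
    b ^ k = Matrix.of fun i j : Fin n => if (i : ℕ) + k = (j : ℕ) then 1 else 0 := by
  induction k with
  | zero =>
    ext i j
    simp only [pow_zero, Matrix.one_apply, Matrix.of_apply, Nat.add_zero]
    by_cases h : i = j
    · simp [h]
    · rw [if_neg h, if_neg (by simpa [Fin.ext_iff] using h)]
  | succ k ih =>
    ext i j
    rw [pow_succ, Matrix.mul_apply]
    simp only [ih]
    simp only [hb, Matrix.of_apply]
    by_cases h : (i : ℕ) + (k + 1) = (j : ℕ)
    · have hik : (i : ℕ) + k < n := by omega
      rw [Finset.sum_eq_single (⟨(i:ℕ)+k, hik⟩ : Fin n)]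
      · rw [if_pos h]
        simp only [Fin.val_mk, if_true]
        rw [if_pos (show (i:ℕ) + k + 1 = (j:ℕ) by omega)]
        norm_num
      · intro m _ hm
        rw [if_neg (by simp only [ne_eq, Fin.ext_iff, Fin.val_mk] at hm; omega), zero_mul]
      · simp
    · rw [if_neg h]
      apply Finset.sum_eq_zero
      intro m _
      rcases eq_or_ne ((i:ℕ) + k) ((m:ℕ)) with h1 | h1
      · rw [if_neg (show ¬ ((m:ℕ) + 1 = (j:ℕ)) by omega), mul_zero]
      · rw [if_neg h1, zero_mul]

lemma aux_Lmul (n : ℕ) (α : ℂ) (Λ : Matrix (Fin n) (Fin n) ℂ)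
    (hΛ : Λ = Matrix.of fun i j : Fin n =>
        if (i : ℕ) = (j : ℕ) + 1 then (1 - α ^ (i : ℕ)) / (1 - α) else 0)
    (a c : Fin n) (x : ℂ) (h : (a : ℕ) + 1 < n) :
    Λ * single a c x =
      single ⟨(a : ℕ) + 1, h⟩ c ((1 - α ^ ((a : ℕ) + 1)) / (1 - α) * x) := by
  ext k l
  rw [Matrix.mul_apply]
  rw [Finset.sum_eq_single a]
  · simp only [hΛ, Matrix.of_apply, single, Matrix.of_apply]
    clear hΛ
    split_ifs <;> simp_all [Fin.ext_iff] <;> omega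
  · intro m _ hm
    simp only [single, Matrix.of_apply]
    rw [if_neg (by tauto), mul_zero]
  · simp

lemma aux_mulL (n : ℕ) (α : ℂ) (Λ : Matrix (Fin n) (Fin n) ℂ)
    (hΛ : Λ = Matrix.of fun i j : Fin n =>
        if (i : ℕ) = (j : ℕ) + 1 then (1 - α ^ (i : ℕ)) / (1 - α) else 0)
    (a c : Fin n) (x : ℂ) (h : 0 < (c : ℕ)) :
    single a c x * Λ =
      single a ⟨(c : ℕ) - 1, by omega⟩ (x * ((1 - α ^ (c : ℕ)) / (1 - α))) := by
  ext k l
  rw [Matrix.mul_apply]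
  rw [Finset.sum_eq_single c]
  · simp only [hΛ, Matrix.of_apply, single, Matrix.of_apply]
    clear hΛ
    split_ifs <;> simp_all [Fin.ext_iff] <;> omega
  · intro m _ hm
    simp only [single, Matrix.of_apply]
    rw [if_neg (by tauto), zero_mul]
  · simp

lemma aux_key (n : ℕ) (hn : 2 ≤ n) (α : ℂ)
    (hα : α = Complex.exp (2 * Real.pi * Complex.I / n))
    (b Λ : Matrix (Fin n) (Fin n) ℂ)
    (hb : b = Matrix.of fun i j : Fin n => if (i : ℕ) + 1 = (j : ℕ) then 1 else 0)
    (hΛ : Λ = Matrix.of fun i j : Fin n =>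
        if (i : ℕ) = (j : ℕ) + 1 then (1 - α ^ (i : ℕ)) / (1 - α) else 0)
    (i j : ℕ) (hi : i ≤ n - 1) (hj : j ≤ n - 1) :
    ∃ x : ℂ, x ≠ 0 ∧ Λ ^ i * b ^ (n - 1) * Λ ^ j =
      single ⟨i, by omega⟩ ⟨n - 1 - j, by omega⟩ x := by
  have hc : ∀ t : ℕ, 0 < t → t < n → (1 - α ^ t) / (1 - α) ≠ 0 := by
    intro t ht htn
    have h1 : α ^ t ≠ 1 := aux_pow_ne_one n hn α hα ht htn
    have h2 : α ≠ 1 := by simpa using aux_pow_ne_one n hn α hα one_pos (by omega)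
    exact div_ne_zero (sub_ne_zero.mpr fun h => h1 h.symm)
      (sub_ne_zero.mpr fun h => h2 h.symm)
  -- b ^ (n-1) = E 0 (n-1) 1
  have hB : b ^ (n - 1) = single (⟨0, by omega⟩ : Fin n) ⟨n - 1, by omega⟩ (1 : ℂ) := by
    rw [aux_bpow n b hb]
    ext k l
    simp only [Matrix.of_apply, single, Fin.ext_iff, Fin.val_mk]
    have hk := k.isLt; have hl := l.isLt
    split_ifs <;> first | rfl | omega
  -- left multiplication
  have hL : ∀ i : ℕ, (hi : i ≤ n - 1) → ∃ x : ℂ, x ≠ 0 ∧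
      Λ ^ i * b ^ (n - 1) = single ⟨i, by omega⟩ ⟨n - 1, by omega⟩ x := by
    intro i
    induction i with
    | zero => intro _; exact ⟨1, one_ne_zero, by rw [pow_zero, one_mul, hB]⟩
    | succ i ih =>
      intro hi1
      obtain ⟨x, hx, hEq⟩ := ih (by omega)
      refine ⟨(1 - α ^ (i + 1)) / (1 - α) * x,
        mul_ne_zero (hc (i + 1) (by omega) (by omega)) hx, ?_⟩
      rw [pow_succ', mul_assoc, hEq,
        aux_Lmul n α Λ hΛ ⟨i, by omega⟩ ⟨n - 1, by omega⟩ x (by simpa using by omega : ((⟨i, by omega⟩ : Fin n) : ℕ) + 1 < n)]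
  -- right multiplication
  have hR : ∀ j : ℕ, (hj : j ≤ n - 1) → ∃ d : ℂ, d ≠ 0 ∧ ∀ (a : Fin n) (x : ℂ),
      single a ⟨n - 1, by omega⟩ x * Λ ^ j =
        single a ⟨n - 1 - j, by omega⟩ (x * d) := by
    intro j
    induction j with
    | zero =>
      intro _
      exact ⟨1, one_ne_zero, fun a x => by simp [pow_zero, mul_one]⟩
    | succ j ih =>
      intro hj1
      obtain ⟨d, hd, hEq⟩ := ih (by omega)
      refine ⟨d * ((1 - α ^ (n - 1 - j)) / (1 - α)),
        mul_ne_zero hd (hc (n - 1 - j) (by omega) (by omega)), fun a x => ?_⟩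
      rw [pow_succ, ← mul_assoc, hEq a x,
        aux_mulL n α Λ hΛ a ⟨n - 1 - j, by omega⟩ (x * d) (by simpa using by omega)]
      simp only [Fin.val_mk]
      rw [mul_assoc]
      congr 1
  obtain ⟨x, hx, hxe⟩ := hL i hi
  obtain ⟨d, hd, hde⟩ := hR j hj
  exact ⟨x * d, mul_ne_zero hx hd, by rw [hxe, hde]⟩

theorem stmt14 (n : ℕ) (hn : 2 ≤ n)
    (α : ℂ) (hα : α = Complex.exp (2 * Real.pi * Complex.I / n))
    (b Λ : Matrix (Fin n) (Fin n) ℂ)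
    (hb : b = Matrix.of fun i j : Fin n => if (i : ℕ) + 1 = (j : ℕ) then 1 else 0)
    (hΛ : Λ = Matrix.of fun i j : Fin n =>
        if (i : ℕ) = (j : ℕ) + 1 then (1 - α ^ (i : ℕ)) / (1 - α) else 0)
    (U : Submodule ℂ (Matrix (Fin n) (Fin n) ℂ))
    (hU : ∀ m, m ∈ U ↔ ∀ k l : Fin n, ¬ ((k : ℕ) < (l : ℕ)) → m k l = 0) :
    Submodule.span ℂ
        {m | ∃ i j : ℕ, i ≤ n - 1 ∧ j ≤ n - 1 ∧ m = Λ ^ i * b ^ (n - 1) * Λ ^ j} = ⊤ ∧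
    LinearIndependent ℂ
      (fun p : {p : ℕ × ℕ // p.1 + p.2 < n - 1} =>
        Λ ^ p.1.1 * b ^ (n - 1) * Λ ^ p.1.2) ∧
    Submodule.span ℂ
      (Set.range fun p : {p : ℕ × ℕ // p.1 + p.2 < n - 1} =>
        Λ ^ p.1.1 * b ^ (n - 1) * Λ ^ p.1.2) = U := by
  have key := aux_key n hn α hα b Λ hb hΛ
  refine ⟨?_, ?_, ?_⟩
  · -- spans everything
    rw [eq_top_iff]
    rintro m -
    rw [Matrix.matrix_eq_sum_single m]
    refine Submodule.sum_mem _ fun k _ => Submodule.sum_mem _ fun l _ => ?_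
    have hk := k.isLt; have hl := l.isLt
    obtain ⟨x, hx, hxe⟩ := key (k : ℕ) (n - 1 - (l : ℕ)) (by omega) (by omega)
    have hmem : (Λ ^ (k : ℕ) * b ^ (n - 1) * Λ ^ (n - 1 - (l : ℕ))) ∈
        Submodule.span ℂ
          {m | ∃ i j : ℕ, i ≤ n - 1 ∧ j ≤ n - 1 ∧ m = Λ ^ i * b ^ (n - 1) * Λ ^ j} :=
      Submodule.subset_span ⟨(k : ℕ), n - 1 - (l : ℕ), by omega, by omega, rfl⟩
    have heq : single k l (m k l) =
        (m k l * x⁻¹) • (Λ ^ (k : ℕ) * b ^ (n - 1) * Λ ^ (n - 1 - (l : ℕ))) := by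
      rw [hxe, Matrix.smul_single, smul_eq_mul, mul_assoc, inv_mul_cancel₀ hx,
        mul_one]
      ext pp qq
      simp only [Matrix.single, Matrix.of_apply, Fin.ext_iff, Fin.val_mk]
      split_ifs <;> first | rfl | omega
    rw [heq]
    exact Submodule.smul_mem _ _ hmem
  · -- linear independence
    have hg : Function.Injective
        (fun p : {p : ℕ × ℕ // p.1 + p.2 < n - 1} =>
          ((⟨p.1.1, by have := p.2; omega⟩, ⟨n - 1 - p.1.2, by have := p.2; omega⟩) :
            Fin n × Fin n)) := by
      rintro ⟨⟨i, j⟩, hp⟩ ⟨⟨i', j'⟩, hp'⟩ h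
      simp only [Prod.mk.injEq, Fin.mk.injEq] at h
      simp only [Subtype.mk.injEq, Prod.mk.injEq]
      omega
    have li := ((Matrix.stdBasis ℂ (Fin n) (Fin n)).linearIndependent.comp _ hg)
    choose x hx hxe using fun p : {p : ℕ × ℕ // p.1 + p.2 < n - 1} =>
      key p.1.1 p.1.2 (by have := p.2; omega) (by have := p.2; omega)
    have li2 := li.units_smul (fun p => Units.mk0 (x p) (hx p))
    have hfun : (fun p : {p : ℕ × ℕ // p.1 + p.2 < n - 1} =>
        Λ ^ p.1.1 * b ^ (n - 1) * Λ ^ p.1.2) =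
        ((fun p => Units.mk0 (x p) (hx p)) •
          ((Matrix.stdBasis ℂ (Fin n) (Fin n)) ∘
            (fun p : {p : ℕ × ℕ // p.1 + p.2 < n - 1} =>
              ((⟨p.1.1, by have := p.2; omega⟩, ⟨n - 1 - p.1.2, by have := p.2; omega⟩) :
                Fin n × Fin n)))) := by
      funext p
      rw [hxe p]
      simp only [Pi.smul_apply', Function.comp_apply, Matrix.stdBasis_eq_single,
        Units.smul_def, Units.val_mk0, Matrix.smul_single, smul_eq_mul, mul_one]
    rw [hfun]
    exact li2
  · -- span of triangular family = U
    apply le_antisymm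
    · rw [Submodule.span_le]
      rintro _ ⟨p, rfl⟩
      rw [SetLike.mem_coe, hU]
      intro k l hkl
      obtain ⟨x, hx, hxe⟩ := key p.1.1 p.1.2 (by have := p.2; omega) (by have := p.2; omega)
      simp only [hxe]
      simp only [single, Matrix.of_apply]
      rw [if_neg]
      rintro ⟨h1, h2⟩
      exact hkl (by rw [← h1, ← h2]; simp only [Fin.val_mk]; have := p.2; omega)
    · intro m hm
      rw [hU] at hm
      rw [Matrix.matrix_eq_sum_single m]
      refine Submodule.sum_mem _ fun k _ => Submodule.sum_mem _ fun l _ => ?_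
      have hk := k.isLt; have hl := l.isLt
      by_cases hkl : (k : ℕ) < (l : ℕ)
      · obtain ⟨x, hx, hxe⟩ := key (k : ℕ) (n - 1 - (l : ℕ)) (by omega) (by omega)
        have hmem : (Λ ^ (k : ℕ) * b ^ (n - 1) * Λ ^ (n - 1 - (l : ℕ))) ∈
            Submodule.span ℂ
              (Set.range fun p : {p : ℕ × ℕ // p.1 + p.2 < n - 1} =>
                Λ ^ p.1.1 * b ^ (n - 1) * Λ ^ p.1.2) :=
          Submodule.subset_span ⟨⟨((k : ℕ), n - 1 - (l : ℕ)), by omega⟩, rfl⟩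
        have heq : single k l (m k l) =
            (m k l * x⁻¹) • (Λ ^ (k : ℕ) * b ^ (n - 1) * Λ ^ (n - 1 - (l : ℕ))) := by
          rw [hxe, Matrix.smul_single, smul_eq_mul, mul_assoc, inv_mul_cancel₀ hx,
            mul_one]
          ext pp qq
          simp only [Matrix.single, Matrix.of_apply, Fin.ext_iff, Fin.val_mk]
          split_ifs <;> first | rfl | omega
        rw [heq]
        exact Submodule.smul_mem _ _ hmem
      · rw [hm k l hkl]
        simp
end

section
/- Let Λ = Σ_{k=1}^{n−1} ((1−α^k)/(1−α)) e_{k+1,k} with α = e^{2πi/n} a primitive n-th root of unity. Then for each 1 ≤ j ≤ n−1, the sum of the entries of Λ^j on its −j-th diagonal, tr_{-j}(Λ^j), is nonzero. -/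
open Matrix

theorem stmt15 (n : ℕ) (hn : 2 ≤ n)
    (α : ℂ) (hα : α = Complex.exp (2 * Real.pi * Complex.I / n))
    (Λ : Matrix (Fin n) (Fin n) ℂ)
    (hΛ : Λ = Matrix.of fun i j : Fin n =>
        if (i : ℕ) = (j : ℕ) + 1 then (1 - α ^ (i : ℕ)) / (1 - α) else 0) :
    ∀ j : ℕ, 1 ≤ j → j ≤ n - 1 →
      (∑ p : Fin n, if h : (p : ℕ) + j < n then (Λ ^ j) ⟨(p : ℕ) + j, h⟩ p else 0) ≠ 0 := by
  intro j hj1 hjn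
  have hn0 : n ≠ 0 := by omega
  have hprim : IsPrimitiveRoot α n := by
    rw [hα]; exact Complex.isPrimitiveRoot_exp n hn0
  have hαn : α ^ n = 1 := hprim.pow_eq_one
  have hpow_ne : ∀ m : ℕ, 0 < m → m < n → α ^ m ≠ 1 := fun m h1 h2 =>
    hprim.pow_ne_one_of_pos_of_lt h1.ne' h2
  have hα1 : α ≠ 1 := by
    have := hpow_ne 1 one_pos (by omega); simpa using this
  have hsub : (1 - α) ≠ 0 := sub_ne_zero.mpr (fun h => hα1 h.symm)
  have hΛe : ∀ x b : Fin n, Λ x b =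
      if (x : ℕ) = (b : ℕ) + 1 then (1 - α ^ (x : ℕ)) / (1 - α) else 0 := by
    intro x b; rw [hΛ]; rfl
  -- entries of Λ^m
  have key : ∀ m : ℕ, ∀ a b : Fin n, (Λ ^ m) a b =
      if (a : ℕ) = (b : ℕ) + m then
        ∏ t ∈ Finset.range m, ((1 - α ^ ((b : ℕ) + t + 1)) / (1 - α)) else 0 := by
    intro m
    induction m with
    | zero =>
      intro a b
      simp [Matrix.one_apply, Fin.ext_iff]
    | succ m ih =>
      intro a b
      rw [pow_succ, Matrix.mul_apply]
      have hterm : ∀ x : Fin n, (Λ ^ m) a x * Λ x b =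
          if (x : ℕ) = (b : ℕ) + 1 then
            (Λ ^ m) a x * ((1 - α ^ (x : ℕ)) / (1 - α)) else 0 := by
        intro x
        rw [hΛe x b]
        by_cases h : (x : ℕ) = (b : ℕ) + 1
        · rw [if_pos h, if_pos h]
        · rw [if_neg h, if_neg h, mul_zero]
      rw [Finset.sum_congr rfl fun x _ => hterm x]
      by_cases hb : (b : ℕ) + 1 < n
      · rw [Finset.sum_eq_single (⟨(b : ℕ) + 1, hb⟩ : Fin n)]
        · rw [if_pos rfl, ih]
          have hv : ((⟨(b : ℕ) + 1, hb⟩ : Fin n) : ℕ) = (b : ℕ) + 1 := rfl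
          rw [hv]
          by_cases hab : (a : ℕ) = (b : ℕ) + (m + 1)
          · rw [if_pos hab, if_pos (show (a : ℕ) = (b : ℕ) + 1 + m by omega),
              Finset.prod_range_succ']
            rw [Finset.prod_congr rfl (fun t _ => by
              rw [show (b : ℕ) + 1 + t + 1 = (b : ℕ) + (t + 1) + 1 from by omega] :
              ∀ t ∈ Finset.range m, (1 - α ^ ((b : ℕ) + 1 + t + 1)) / (1 - α)
                = (1 - α ^ ((b : ℕ) + (t + 1) + 1)) / (1 - α))]
          · rw [if_neg hab, if_neg (show ¬ (a : ℕ) = (b : ℕ) + 1 + m by omega), zero_mul]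
          
        · intro x _ hx
          rw [if_neg]
          intro h
          exact hx (Fin.ext h)
        · intro h; exact absurd (Finset.mem_univ _) h
      · rw [Finset.sum_eq_zero, if_neg (by omega : ¬ (a:ℕ) = (b:ℕ) + (m+1))]
        intro x _
        rw [if_neg (by have := x.isLt; omega)]
  -- geometric sums
  have hg : ∀ m : ℕ, m ≤ j → (∑ p : Fin n, (α ^ m) ^ (p : ℕ)) =
      if m = 0 then (n : ℂ) else 0 := by
    intro m hm
    rw [Fin.sum_univ_eq_sum_range (fun p => (α ^ m) ^ p) n]
    by_cases hm0 : m = 0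
    · subst hm0; simp
    · rw [if_neg hm0]
      have hne : α ^ m ≠ 1 := hpow_ne m (Nat.pos_of_ne_zero hm0) (by omega)
      rw [geom_sum_eq hne, ← pow_mul, mul_comm, pow_mul, hαn, one_pow, sub_self, zero_div]
  -- the main sum over all p of the products equals n
  have hmain : (∑ p : Fin n, ∏ t ∈ Finset.range j, (1 - α ^ ((p : ℕ) + t + 1))) = (n : ℂ) := by
    have h1 : ∀ p : Fin n, (∏ t ∈ Finset.range j, (1 - α ^ ((p : ℕ) + t + 1)))
        = ∑ s ∈ (Finset.range j).powerset,
            (∏ t ∈ s, (-(α ^ (t + 1)))) * (α ^ s.card) ^ (p : ℕ) := by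
      intro p
      have hfac : ∀ t : ℕ, (1 : ℂ) - α ^ ((p : ℕ) + t + 1)
          = (-(α ^ (t + 1))) * α ^ (p : ℕ) + 1 := by
        intro t
        rw [show (p : ℕ) + t + 1 = (t + 1) + (p : ℕ) from by omega, pow_add]
        ring
      rw [Finset.prod_congr rfl fun t _ => hfac t, Finset.prod_add]
      refine Finset.sum_congr rfl fun s hs => ?_
      rw [Finset.prod_const_one, mul_one, Finset.prod_mul_distrib, Finset.prod_const,
        pow_right_comm]
    rw [Finset.sum_congr rfl fun p _ => h1 p, Finset.sum_comm]
    rw [Finset.sum_congr rfl fun s _ => (Finset.mul_sum _ _ _).symm]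
    rw [Finset.sum_eq_single (∅ : Finset ℕ)]
    · simp
    · intro s hs hne
      have hcard : s.card ≠ 0 := fun h => hne (Finset.card_eq_zero.mp h)
      have hle : s.card ≤ j := by
        have := Finset.card_le_card (Finset.mem_powerset.mp hs)
        simpa using this
      rw [hg s.card hle, if_neg hcard, mul_zero]
    · intro h; exact absurd (Finset.empty_mem_powerset _) h
  -- rewrite the target sum
  have hsum : (∑ p : Fin n, if h : (p : ℕ) + j < n then (Λ ^ j) ⟨(p : ℕ) + j, h⟩ p else 0)
      = (∑ p : Fin n, ∏ t ∈ Finset.range j, (1 - α ^ ((p : ℕ) + t + 1))) / (1 - α) ^ j := by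
    rw [Finset.sum_div]
    refine Finset.sum_congr rfl fun p _ => ?_
    by_cases h : (p : ℕ) + j < n
    · rw [dif_pos h, key, if_pos rfl, Finset.prod_div_distrib, Finset.prod_const,
        Finset.card_range]
    · rw [dif_neg h]
      symm
      rw [div_eq_zero_iff]
      left
      refine Finset.prod_eq_zero (i := n - (p : ℕ) - 1) ?_ ?_
      · exact Finset.mem_range.mpr (by have := p.isLt; omega)
      · rw [show (p : ℕ) + (n - (p : ℕ) - 1) + 1 = n from by have := p.isLt; omega,
          hαn, sub_self]
  rw [hsum, hmain]
  apply div_ne_zero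
  · exact_mod_cast hn0
  · exact pow_ne_zero _ hsub
end

section
/- Suppose η ∈ C^∞(ℝ, B_-) (lower triangular matrix valued) satisfies η(∂_x − (J+ξ))η^{-1} = ∂_x − (J+ξ̃) where ξ = Σ ξ_i e_{n,n−i} and ξ̃ = Σ ξ̃_i e_{n,n−i} both lie in C^∞(ℝ, S_1). Then η = c·I_n for some constant c ∈ ℂ. -/
open Matrix

theorem stmt18 (n : ℕ) (hn : 2 ≤ n)
    (b : Matrix (Fin n) (Fin n) ℂ)
    (hb : b = Matrix.of fun i j : Fin n => if (i : ℕ) + 1 = (j : ℕ) then 1 else 0)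
    (η η' ξ ξ' : ℝ → Matrix (Fin n) (Fin n) ℂ)
    (hηlow : ∀ x, ∀ k l : Fin n, (k : ℕ) < (l : ℕ) → η x k l = 0)
    (hηinv : ∀ x, IsUnit (η x))
    (hηderiv : ∀ (k l : Fin n) (x : ℝ), HasDerivAt (fun t => η t k l) (η' x k l) x)
    (hξ : ∀ x, ∀ k l : Fin n, ξ x k l ≠ 0 → (k : ℕ) = n - 1 ∧ (l : ℕ) < n - 1)
    (hξ' : ∀ x, ∀ k l : Fin n, ξ' x k l ≠ 0 → (k : ℕ) = n - 1 ∧ (l : ℕ) < n - 1)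
    (heq : ∀ x, b * η x - η x * b = η x * ξ x + η' x - ξ' x * η x) :
    ∃ c : ℂ, ∀ x, η x = c • (1 : Matrix (Fin n) (Fin n) ℂ) := by
  have hn0 : 0 < n := by omega
  have hN : n - 1 < n := by omega
  -- entries of b * η
  have hbη : ∀ x (ki : ℕ) (hk' : ki < n) (hk : ki + 1 < n) (l : Fin n),
      (b * η x) ⟨ki, hk'⟩ l = η x ⟨ki + 1, hk⟩ l := by
    intro x ki hk' hk l
    rw [mul_apply]
    rw [Finset.sum_eq_single (⟨ki + 1, hk⟩ : Fin n)]
    · simp [hb]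
    · intro j _ hj
      have hv : ¬ (ki + 1 = (j : ℕ)) := by
        intro hc; exact hj (Fin.ext hc.symm)
      simp [hb, hv]
    · simp
  have hbηN : ∀ x (l : Fin n), (b * η x) ⟨n - 1, hN⟩ l = 0 := by
    intro x l
    rw [mul_apply]
    apply Finset.sum_eq_zero
    intro j _
    have hj := j.isLt
    have hv : ¬ ((n - 1) + 1 = (j : ℕ)) := by omega
    simp [hb, hv]
  -- entries of η * b
  have hηb0 : ∀ x (k : Fin n), (η x * b) k ⟨0, hn0⟩ = 0 := by
    intro x k
    rw [mul_apply]
    apply Finset.sum_eq_zero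
    intro j _
    have hv : ¬ ((j : ℕ) + 1 = 0) := by omega
    simp [hb, hv]
  have hηbS : ∀ x (k : Fin n) (lj : ℕ) (hl' : lj < n) (hl : lj + 1 < n),
      (η x * b) k ⟨lj + 1, hl⟩ = η x k ⟨lj, hl'⟩ := by
    intro x k lj hl' hl
    rw [mul_apply]
    rw [Finset.sum_eq_single (⟨lj, hl'⟩ : Fin n)]
    · simp [hb]
    · intro j _ hj
      have hv : ¬ ((j : ℕ) + 1 = lj + 1) := by
        intro hc; exact hj (Fin.ext (show (j : ℕ) = lj by omega))
      simp [hb, hv]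
      intro hc; exact absurd (Fin.ext hc) hj
    · simp
  -- entries of η * ξ
  have hηξ : ∀ x (k l : Fin n),
      (η x * ξ x) k l = η x k ⟨n - 1, hN⟩ * ξ x ⟨n - 1, hN⟩ l := by
    intro x k l
    rw [mul_apply]
    rw [Finset.sum_eq_single (⟨n - 1, hN⟩ : Fin n)]
    · intro j _ hj
      by_cases hz : ξ x j l = 0
      · simp [hz]
      · exact absurd (Fin.ext ((hξ x j l hz).1)) hj
    · simp
  -- entries of ξ' * η
  have hrow : ∀ x (k l : Fin n), (k : ℕ) ≠ n - 1 → (ξ' x * η x) k l = 0 := by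
    intro x k l hk
    rw [mul_apply]
    apply Finset.sum_eq_zero
    intro j _
    by_cases hz : ξ' x k j = 0
    · simp [hz]
    · exact absurd (hξ' x k j hz).1 hk
  have hcol : ∀ x (k : Fin n), (ξ' x * η x) k ⟨n - 1, hN⟩ = 0 := by
    intro x k
    rw [mul_apply]
    apply Finset.sum_eq_zero
    intro j _
    by_cases hz : ξ' x k j = 0
    · simp [hz]
    · have hj := (hξ' x k j hz).2
      have hη0 : η x j ⟨n - 1, hN⟩ = 0 := hηlow x j _ hj
      simp [hη0]
  have hξnn : ∀ x, ξ x ⟨n - 1, hN⟩ ⟨n - 1, hN⟩ = 0 := by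
    intro x
    by_contra hz
    have h1 := (hξ x _ _ hz).2
    have h2 : n - 1 < n - 1 := h1
    omega
  -- component equations
  have hstep0 : ∀ x (ki : ℕ) (hk' : ki < n) (hk : ki + 1 < n),
      η x ⟨ki + 1, hk⟩ ⟨0, hn0⟩ =
        η x ⟨ki, hk'⟩ ⟨n - 1, hN⟩ * ξ x ⟨n - 1, hN⟩ ⟨0, hn0⟩
          + η' x ⟨ki, hk'⟩ ⟨0, hn0⟩ - (ξ' x * η x) ⟨ki, hk'⟩ ⟨0, hn0⟩ := by
    intro x ki hk' hk
    have h := congrFun (congrFun (heq x) ⟨ki, hk'⟩) ⟨0, hn0⟩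
    simp only [Matrix.sub_apply, Matrix.add_apply] at h
    rw [hbη x ki hk' hk, hηb0, hηξ, sub_zero] at h
    exact h
  have hstepS : ∀ x (ki lj : ℕ) (hk' : ki < n) (hk : ki + 1 < n) (hl' : lj < n)
      (hl : lj + 1 < n),
      η x ⟨ki + 1, hk⟩ ⟨lj + 1, hl⟩ - η x ⟨ki, hk'⟩ ⟨lj, hl'⟩ =
        η x ⟨ki, hk'⟩ ⟨n - 1, hN⟩ * ξ x ⟨n - 1, hN⟩ ⟨lj + 1, hl⟩
          + η' x ⟨ki, hk'⟩ ⟨lj + 1, hl⟩ - (ξ' x * η x) ⟨ki, hk'⟩ ⟨lj + 1, hl⟩ := by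
    intro x ki lj hk' hk hl' hl
    have h := congrFun (congrFun (heq x) ⟨ki, hk'⟩) ⟨lj + 1, hl⟩
    simp only [Matrix.sub_apply, Matrix.add_apply] at h
    rw [hbη x ki hk' hk, hηbS x _ lj hl' hl, hηξ] at h
    exact h
  have hlast : ∀ x (lj : ℕ) (hl' : lj < n) (hl : lj + 1 < n),
      - η x ⟨n - 1, hN⟩ ⟨lj, hl'⟩ =
        η x ⟨n - 1, hN⟩ ⟨n - 1, hN⟩ * ξ x ⟨n - 1, hN⟩ ⟨lj + 1, hl⟩
          + η' x ⟨n - 1, hN⟩ ⟨lj + 1, hl⟩ - (ξ' x * η x) ⟨n - 1, hN⟩ ⟨lj + 1, hl⟩ := by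
    intro x lj hl' hl
    have h := congrFun (congrFun (heq x) ⟨n - 1, hN⟩) ⟨lj + 1, hl⟩
    simp only [Matrix.sub_apply, Matrix.add_apply] at h
    rw [hbηN, hηbS x _ lj hl' hl, hηξ, zero_sub] at h
    exact h
  -- derivative of an identically zero entry is zero
  have hdeq0 : ∀ (k l : Fin n), (∀ t, η t k l = 0) → ∀ x, η' x k l = 0 := by
    intro k l h x
    have h1 := hηderiv k l x
    have h2 : HasDerivAt (fun t => η t k l) (0 : ℂ) x := by
      have he : (fun t => η t k l) = fun _ => (0 : ℂ) := funext h
      rw [he]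
      exact hasDerivAt_const x 0
    exact h1.unique h2
  -- all diagonal entries are equal
  have hdiag : ∀ x (k : Fin n), η x k k = η x ⟨0, hn0⟩ ⟨0, hn0⟩ := by
    intro x k
    obtain ⟨i, hi⟩ := k
    induction i with
    | zero => rfl
    | succ i ih =>
      have hi' : i < n := by omega
      have h := hstepS x i i hi' hi hi' hi
      have hz1 : η x ⟨i, hi'⟩ ⟨n - 1, hN⟩ = 0 :=
        hηlow x ⟨i, hi'⟩ ⟨n - 1, hN⟩ (show i < n - 1 by omega)
      have hz2 : η' x ⟨i, hi'⟩ ⟨i + 1, hi⟩ = 0 :=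
        hdeq0 _ _ (fun t => hηlow t ⟨i, hi'⟩ ⟨i + 1, hi⟩ (show i < i + 1 by omega)) x
      have hz3 : (ξ' x * η x) ⟨i, hi'⟩ ⟨i + 1, hi⟩ = 0 :=
        hrow x _ _ (show i ≠ n - 1 by omega)
      rw [hz1, zero_mul, hz2, hz3] at h
      have h2 : η x ⟨i + 1, hi⟩ ⟨i + 1, hi⟩ = η x ⟨i, hi'⟩ ⟨i, hi'⟩ := by
        linear_combination h
      rw [h2, ih hi']
  -- hence all diagonal entries have equal derivative
  have hdiag' : ∀ x (k : Fin n), η' x k k = η' x ⟨0, hn0⟩ ⟨0, hn0⟩ := by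
    intro x k
    have h1 := hηderiv k k x
    have h2 := hηderiv ⟨0, hn0⟩ ⟨0, hn0⟩ x
    have he : (fun t => η t k k) = fun t => η t ⟨0, hn0⟩ ⟨0, hn0⟩ :=
      funext fun t => hdiag t k
    rw [he] at h1
    exact h1.unique h2
  -- first subdiagonal entries
  have hsub : ∀ x (j : ℕ) (hj' : j < n) (hj : j + 1 < n),
      η x ⟨j + 1, hj⟩ ⟨j, hj'⟩ = ((j : ℂ) + 1) * η' x ⟨0, hn0⟩ ⟨0, hn0⟩ := by
    intro x j
    induction j with
    | zero =>
      intro hj' hj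
      have h := hstep0 x 0 hn0 hj
      have hz1 : η x ⟨0, hn0⟩ ⟨n - 1, hN⟩ = 0 :=
        hηlow x ⟨0, hn0⟩ ⟨n - 1, hN⟩ (show 0 < n - 1 by omega)
      have hz3 : (ξ' x * η x) ⟨0, hn0⟩ ⟨0, hn0⟩ = 0 :=
        hrow x _ _ (show 0 ≠ n - 1 by omega)
      rw [hz1, zero_mul, hz3] at h
      have hgoal : η x ⟨0 + 1, hj⟩ ⟨0, hj'⟩ = η' x ⟨0, hn0⟩ ⟨0, hn0⟩ := by
        rw [h]; ring
      rw [hgoal]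
      norm_num
    | succ j ih =>
      intro hj' hj
      have hjn : j < n := by omega
      have h := hstepS x (j + 1) j hj' hj hjn hj'
      have hz1 : η x ⟨j + 1, hj'⟩ ⟨n - 1, hN⟩ = 0 :=
        hηlow x ⟨j + 1, hj'⟩ ⟨n - 1, hN⟩ (show j + 1 < n - 1 by omega)
      have hz2 : η' x ⟨j + 1, hj'⟩ ⟨j + 1, hj'⟩ = η' x ⟨0, hn0⟩ ⟨0, hn0⟩ :=
        hdiag' x ⟨j + 1, hj'⟩
      have hz3 : (ξ' x * η x) ⟨j + 1, hj'⟩ ⟨j + 1, hj'⟩ = 0 :=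
        hrow x _ _ (show j + 1 ≠ n - 1 by omega)
      rw [hz1, zero_mul, hz2, hz3, ih hjn hj'] at h
      push_cast
      linear_combination h
  -- the common diagonal derivative vanishes
  have hc0 : ∀ x, η' x ⟨0, hn0⟩ ⟨0, hn0⟩ = 0 := by
    intro x
    have hl' : n - 2 < n := by omega
    have hl : n - 2 + 1 < n := by omega
    have h := hlast x (n - 2) hl' hl
    have e : (⟨n - 2 + 1, hl⟩ : Fin n) = ⟨n - 1, hN⟩ := Fin.ext (show n - 2 + 1 = n - 1 by omega)
    rw [e] at h
    have hz2 : η' x ⟨n - 1, hN⟩ ⟨n - 1, hN⟩ = η' x ⟨0, hn0⟩ ⟨0, hn0⟩ :=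
      hdiag' x ⟨n - 1, hN⟩
    rw [hξnn, mul_zero, hcol, hz2] at h
    have key := hsub x (n - 2) hl' hl
    rw [e] at key
    rw [key] at h
    have hcast : ((n - 2 : ℕ) : ℂ) + 1 + 1 = (n : ℂ) := by
      have h2 : ((n - 2) + 2 : ℕ) = n := by omega
      calc ((n - 2 : ℕ) : ℂ) + 1 + 1 = (((n - 2) + 2 : ℕ) : ℂ) := by push_cast; ring
        _ = (n : ℂ) := by rw [h2]
    have hmul : (n : ℂ) * η' x ⟨0, hn0⟩ ⟨0, hn0⟩ = 0 := by
      rw [← hcast]; linear_combination -h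
    have hn' : (n : ℂ) ≠ 0 := Nat.cast_ne_zero.mpr (by omega)
    exact (mul_eq_zero.mp hmul).resolve_left hn'
  -- all strictly lower entries vanish
  have hzero : ∀ d x (i j : ℕ) (hij : j + d + 1 = i) (hi : i < n) (hj : j < n),
      η x ⟨i, hi⟩ ⟨j, hj⟩ = 0 := by
    intro d
    induction d with
    | zero =>
      intro x i j hij hi hj
      subst hij
      have h := hsub x j hj hi
      rw [hc0, mul_zero] at h
      exact h
    | succ d ihd =>
      intro x i j hij hi hj
      have H : ∀ j' (hi' : j' + (d + 1) + 1 < n) (hj'' : j' < n),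
          η x ⟨j' + (d + 1) + 1, hi'⟩ ⟨j', hj''⟩ = 0 := by
        intro j'
        induction j' with
        | zero =>
          intro hi' hj''
          have hk' : d + 1 < n := by omega
          have hk : d + 1 + 1 < n := by omega
          have h := hstep0 x (d + 1) hk' hk
          have hz1 : η x ⟨d + 1, hk'⟩ ⟨n - 1, hN⟩ = 0 :=
            hηlow x ⟨d + 1, hk'⟩ ⟨n - 1, hN⟩ (show d + 1 < n - 1 by omega)
          have hz2 : η' x ⟨d + 1, hk'⟩ ⟨0, hn0⟩ = 0 :=
            hdeq0 _ _ (fun t => ihd t (d + 1) 0 (by omega) hk' hn0) x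
          have hz3 : (ξ' x * η x) ⟨d + 1, hk'⟩ ⟨0, hn0⟩ = 0 :=
            hrow x _ _ (show d + 1 ≠ n - 1 by omega)
          rw [hz1, zero_mul, hz2, hz3] at h
          have efin : (⟨0 + (d + 1) + 1, hi'⟩ : Fin n) = ⟨d + 1 + 1, hk⟩ :=
            Fin.ext (show 0 + (d + 1) + 1 = d + 1 + 1 by omega)
          rw [efin]
          simpa using h
        | succ j' ihj =>
          intro hi' hj''
          have ha' : j' + d + 2 < n := by omega
          have ha : j' + d + 2 + 1 < n := by omega
          have hb' : j' < n := by omega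
          have hbb : j' + 1 < n := by omega
          have h := hstepS x (j' + d + 2) j' ha' ha hb' hbb
          have hz0 : η x ⟨j' + d + 2, ha'⟩ ⟨j', hb'⟩ = 0 := ihj ha' hb'
          have hz1 : η x ⟨j' + d + 2, ha'⟩ ⟨n - 1, hN⟩ = 0 :=
            hηlow x ⟨j' + d + 2, ha'⟩ ⟨n - 1, hN⟩ (show j' + d + 2 < n - 1 by omega)
          have hz2 : η' x ⟨j' + d + 2, ha'⟩ ⟨j' + 1, hbb⟩ = 0 :=
            hdeq0 _ _ (fun t => ihd t (j' + d + 2) (j' + 1) (by omega) ha' hbb) x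
          have hz3 : (ξ' x * η x) ⟨j' + d + 2, ha'⟩ ⟨j' + 1, hbb⟩ = 0 :=
            hrow x _ _ (show j' + d + 2 ≠ n - 1 by omega)
          rw [hz0, hz1, zero_mul, hz2, hz3] at h
          have efin : (⟨j' + 1 + (d + 1) + 1, hi'⟩ : Fin n) = ⟨j' + d + 2 + 1, ha⟩ :=
            Fin.ext (show j' + 1 + (d + 1) + 1 = j' + d + 2 + 1 by omega)
          rw [efin]
          simpa using h
      subst hij
      exact H j hi hj
  -- the diagonal entry is constant in x
  have hderiv0 : ∀ x, HasDerivAt (fun t => η t ⟨0, hn0⟩ ⟨0, hn0⟩) 0 x := by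
    intro x
    have h := hηderiv ⟨0, hn0⟩ ⟨0, hn0⟩ x
    rwa [hc0 x] at h
  have hconst : ∀ x, η x ⟨0, hn0⟩ ⟨0, hn0⟩ = η 0 ⟨0, hn0⟩ ⟨0, hn0⟩ := fun x =>
    is_const_of_deriv_eq_zero (fun t => (hderiv0 t).differentiableAt)
      (fun t => (hderiv0 t).deriv) x 0
  -- conclusion
  refine ⟨η 0 ⟨0, hn0⟩ ⟨0, hn0⟩, fun x => ?_⟩
  ext k l
  rw [Matrix.smul_apply, one_apply]
  by_cases hkl : k = l
  · subst hkl
    rw [if_pos rfl, smul_eq_mul, mul_one, hdiag x k, hconst x]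
  · rw [if_neg hkl, smul_eq_mul, mul_zero]
    rcases lt_trichotomy (k : ℕ) (l : ℕ) with h | h | h
    · exact hηlow x k l h
    · exact absurd (Fin.ext h) hkl
    · exact hzero ((k : ℕ) - (l : ℕ) - 1) x k l (by omega) k.isLt l.isLt
end
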